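/- Theorem 1: Consider the LD-WT-H with parameters n₁, n₂, n_E ∈ ℕ satisfying n₁ ≠ n₂ (so n_Δ > 0). Let n_Q = n_c mod 2n_Δ and define Q = n_Q if n_Q < n_Δ and n₁ ≥ n₂; Q = n_Δ if n_Q ≥ n_Δ and n₁ ≥ n₂; Q = 0 if n_Q < n_Δ and n₁ < n₂; and Q = n_Q − n_Δ if n_Q ≥ n_Δ and n₁ < n₂. Then the secrecy rate R = n_p + ⌊n_c / (2n_Δ)⌋ · n_Δ + Q is achievable for the LD-WT-H. -/

import Mathlib

open MeasureTheory ProbabilityTheory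

/-- Per-use input/output alphabet of the linear deterministic model: bit-vectors in `𝔽₂^q`. -/
abbrev LDVec (q : ℕ) := Fin q → ZMod 2

/-- The `q × q` lower-shift matrix over `𝔽₂` (ones on the first subdiagonal). -/
def shiftMat (q : ℕ) : Matrix (Fin q) (Fin q) (ZMod 2) :=
  Matrix.of fun i j => if (i : ℕ) = (j : ℕ) + 1 then 1 else 0

/-- Deterministic output `S^(q-k₁) x₁ + S^(q-k₂) x₂` of a linear deterministic channel
with channel gains `k₁, k₂` (bit-level shifts), where `+` is componentwise mod-2 addition. -/
def ldOut (q k₁ k₂ : ℕ) (x₁ x₂ : LDVec q) : LDVec q :=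
  ((shiftMat q) ^ (q - k₁)).mulVec x₁ + ((shiftMat q) ^ (q - k₂)).mulVec x₂

/-- Shannon entropy (base 2) of a random variable taking values in a finite type. -/
noncomputable def entropy2 {Ω : Type*} [MeasurableSpace Ω] (μ : Measure Ω)
    {α : Type*} [Fintype α] (X : Ω → α) : ℝ :=
  ∑ a : α, Real.negMulLog ((μ (X ⁻¹' {a})).toReal) / Real.log 2

/-- Mutual information (base 2): `I(X;Y) = H(X) + H(Y) - H(X,Y)`. -/
noncomputable def mutualInfo2 {Ω : Type*} [MeasurableSpace Ω] (μ : Measure Ω)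
    {α β : Type*} [Fintype α] [Fintype β] (X : Ω → α) (Y : Ω → β) : ℝ :=
  entropy2 μ X + entropy2 μ Y - entropy2 μ (fun ω => (X ω, Y ω))

/-- Achievability of a secrecy rate `R` for the linear deterministic wiretap channel with a
helper (LD-WT-H) with parameters `n₁, n₂, nE`: for every `ε > 0` there are a blocklength
`n ≥ 1`, a message `W` uniform on a set of size `k ≥ 2^(nR)`, a (possibly stochastic) encoder
output `X₁ⁿ` (jointly distributed with `W`), a helper input `X₂ⁿ` independent of `(W, X₁ⁿ)`,
and a decoder `g` such that `P(g(Y₁ⁿ) ≠ W) ≤ ε` and `I(W; Y₂ⁿ) ≤ εn`. -/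
def ldWTHAchievable (n₁ n₂ nE : ℕ) (R : ℝ) : Prop :=
  0 ≤ R ∧
  ∀ ε : ℝ, 0 < ε →
    ∃ (n : ℕ), 0 < n ∧
    ∃ (k : ℕ), (2 : ℝ) ^ ((n : ℝ) * R) ≤ (k : ℝ) ∧
    ∃ (Ω : Type) (_ : MeasurableSpace Ω) (μ : Measure Ω) (_ : IsProbabilityMeasure μ)
      (W : Ω → Fin k)
      (X₁ X₂ : Ω → Fin n → LDVec (max (max n₁ n₂) nE))
      (g : (Fin n → LDVec (max (max n₁ n₂) nE)) → Fin k),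
      (∀ m : Fin k, μ (W ⁻¹' {m}) = ((k : ENNReal))⁻¹) ∧
      IndepFun (fun ω => (W ω, X₁ ω)) X₂ μ ∧
      μ {ω | g (fun t => ldOut (max (max n₁ n₂) nE) n₁ n₂ (X₁ ω t) (X₂ ω t)) ≠ W ω}
        ≤ ENNReal.ofReal ε ∧
      mutualInfo2 μ W
          (fun ω => fun t => ldOut (max (max n₁ n₂) nE) nE nE (X₁ ω t) (X₂ ω t))
        ≤ ε * n

/-! ### Auxiliary lemmas -/

lemma shiftMat_pow_apply (q p : ℕ) (i j : Fin q) :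
    ((shiftMat q) ^ p) i j = if (i : ℕ) = (j : ℕ) + p then 1 else 0 := by
  induction p generalizing i j with
  | zero =>
    simp [Matrix.one_apply, Fin.ext_iff]
  | succ p ih =>
    rw [pow_succ, Matrix.mul_apply]
    have : ∀ l : Fin q, ((shiftMat q) ^ p) i l * shiftMat q l j
        = if (l : ℕ) = (j:ℕ) + 1 ∧ (i:ℕ) = (l:ℕ) + p then 1 else 0 := by
      intro l
      rw [ih, shiftMat]
      by_cases h1 : (l:ℕ) = (j:ℕ) + 1 <;> by_cases h2 : (i:ℕ) = (l:ℕ) + p <;>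
        simp [h1, h2, Matrix.of_apply]
    simp_rw [this]
    by_cases hij : (i:ℕ) = (j:ℕ) + (p+1)
    · have hjq : (j:ℕ) + 1 < q := by omega
      rw [Finset.sum_eq_single ⟨(j:ℕ)+1, hjq⟩]
      · have hi := i.2
        rw [if_pos ⟨by simp, by simp; omega⟩, if_pos hij]
      · intro b _ hb
        rw [if_neg]; rintro ⟨h1, -⟩; exact hb (Fin.ext h1)
      · simp
    · rw [if_neg hij]; apply Finset.sum_eq_zero
      intro l _
      rw [if_neg]; rintro ⟨h1, h2⟩; omega

lemma shiftMat_pow_mulVec (q p : ℕ) (x : LDVec q) (i : Fin q) :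
    ((shiftMat q) ^ p).mulVec x i
      = if h : p ≤ (i : ℕ) then x ⟨(i:ℕ) - p, by omega⟩ else 0 := by
  rw [Matrix.mulVec, dotProduct]
  by_cases h : p ≤ (i:ℕ)
  · rw [dif_pos h]
    rw [Finset.sum_eq_single (⟨(i:ℕ) - p, by omega⟩ : Fin q)]
    · rw [shiftMat_pow_apply, if_pos (by simp; omega), one_mul]
    · intro b _ hb
      rw [shiftMat_pow_apply, if_neg, zero_mul]
      intro hc; apply hb; apply Fin.ext; simp; omega
    · simp
  · rw [dif_neg h]
    apply Finset.sum_eq_zero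
    intro l _
    rw [shiftMat_pow_apply, if_neg (by omega), zero_mul]

lemma even_block_count (d : ℕ) (hd : 0 < d) (m : ℕ) :
    ((Finset.range m).filter (fun t => (t / d) % 2 = 0)).card
      = (m / (2*d)) * d + min (m % (2*d)) d := by
  induction m with
  | zero => simp
  | succ m ih =>
    rw [Finset.range_add_one, Finset.filter_insert]
    obtain ⟨a, r, hm, hrlt, hda, hdr⟩ :
        ∃ a r, m = a * (2*d) + r ∧ r < 2*d ∧ m / (2*d) = a ∧ m % (2*d) = r :=
      ⟨m / (2*d), m % (2*d), (Nat.div_add_mod' m (2*d)).symm, Nat.mod_lt _ (by omega), rfl, rfl⟩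
    have hb : (m / d) % 2 = r / d := by
      rw [← hdr, ← Nat.mod_mul_right_div_self m d 2, Nat.mul_comm d 2]
    rw [hda, hdr] at ih
    have hsucc : m + 1 = (r + 1) + a * (2*d) := by omega
    by_cases hcase : r < d
    · have hb0 : (m / d) % 2 = 0 := by rw [hb, Nat.div_eq_of_lt hcase]
      rw [if_pos hb0, Finset.card_insert_of_notMem (by simp), ih]
      have h1 : (m+1) % (2*d) = r + 1 := by
        rw [hsucc, Nat.add_mul_mod_self_right, Nat.mod_eq_of_lt (by omega)]
      have h2 : (m+1) / (2*d) = a := by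
        rw [hsucc, Nat.add_mul_div_right _ _ (by omega : 0 < 2*d),
          Nat.div_eq_of_lt (by omega), Nat.zero_add]
      rw [h1, h2]
      omega
    · have hb1 : (m / d) % 2 = 1 := by
        rw [hb, Nat.div_eq_of_lt_le (k := 1) (by omega) (by omega)]
      rw [if_neg (by omega), ih]
      by_cases h2d : r + 1 < 2*d
      · have h1 : (m+1) % (2*d) = r + 1 := by
          rw [hsucc, Nat.add_mul_mod_self_right, Nat.mod_eq_of_lt h2d]
        have h2 : (m+1) / (2*d) = a := by
          rw [hsucc, Nat.add_mul_div_right _ _ (by omega : 0 < 2*d),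
            Nat.div_eq_of_lt h2d, Nat.zero_add]
        rw [h1, h2]; omega
      · have hm1 : m + 1 = (a+1)*(2*d) := by
          have h : r + 1 = 2*d := by omega
          calc m + 1 = (r+1) + a*(2*d) := hsucc
          _ = 2*d + a*(2*d) := by rw [h]
          _ = (a+1)*(2*d) := by ring
        have h1 : (m+1) % (2*d) = 0 := by rw [hm1]; simp
        have h2 : (m+1) / (2*d) = a + 1 := by
          rw [hm1, Nat.mul_div_cancel _ (by omega : 0 < 2*d)]
        have h3 : (a+1)*d = a*d + d := by ring
        rw [h1, h2]; omega

/-- uniform measure on a finite type (w.r.t. an ambient measurable space). -/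
noncomputable def unifMeas (Ω : Type) [Fintype Ω] [MeasurableSpace Ω] : Measure Ω :=
  ((Nat.card Ω : ENNReal))⁻¹ • Measure.count

lemma unifMeas_apply {Ω : Type} [Fintype Ω] [MeasurableSpace Ω] [MeasurableSingletonClass Ω]
    (s : Set Ω) :
    unifMeas Ω s = (Nat.card s : ENNReal) * ((Nat.card Ω : ENNReal))⁻¹ := by
  rw [unifMeas, Measure.smul_apply, smul_eq_mul,
    Measure.count_apply_finite s (Set.toFinite s),
    Nat.card_eq_card_finite_toFinset (Set.toFinite s), mul_comm]

lemma unifMeas_isProb {Ω : Type} [Fintype Ω] [MeasurableSpace Ω] [MeasurableSingletonClass Ω]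
    [Nonempty Ω] :
    IsProbabilityMeasure (unifMeas Ω) := by
  constructor
  rw [unifMeas_apply _, Nat.card_univ]
  rw [ENNReal.mul_inv_cancel]
  · simp [Nat.card_eq_fintype_card, Fintype.card_ne_zero]
  · simp

lemma unifMeas_prod_apply {A B : Type} [Fintype A] [Fintype B]
    [MeasurableSpace (A × B)] [MeasurableSingletonClass (A × B)]
    (s : Set A) (t : Set B) :
    unifMeas (A × B) (s ×ˢ t)
      = ((Nat.card s : ENNReal) * (Nat.card t : ENNReal))
        * (((Nat.card A : ENNReal) * (Nat.card B : ENNReal)))⁻¹ := by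
  rw [unifMeas_apply, Nat.card_congr (Equiv.Set.prod s t), Nat.card_prod, Nat.card_prod]
  push_cast
  ring

lemma ennreal_unif_helper (a b k v : ENNReal) (hk0 : k ≠ 0) (hktop : k ≠ ⊤)
    (hv0 : v ≠ 0) (hvtop : v ≠ ⊤) :
    ((a * v) * (k * v)⁻¹) * ((k * b) * (k * v)⁻¹) = (a * b) * (k * v)⁻¹ := by
  have hvv : v * v⁻¹ = 1 := ENNReal.mul_inv_cancel hv0 hvtop
  have hkk : k * k⁻¹ = 1 := ENNReal.mul_inv_cancel hk0 hktop
  calc (a * v) * (k * v)⁻¹ * ((k * b) * (k * v)⁻¹)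
      = (a * b) * ((k * v)⁻¹) * ((v * v⁻¹) * (k * k⁻¹)) := by
        rw [ENNReal.mul_inv (Or.inl hk0) (Or.inl hktop)]; ring
    _ = (a * b) * (k * v)⁻¹ := by rw [hvv, hkk, one_mul, mul_one]

lemma sum_toReal_preimage_eq_one {Ω : Type} [MeasurableSpace Ω] (μ : Measure Ω)
    [IsProbabilityMeasure μ] {α : Type*} [Fintype α] (X : Ω → α)
    (hX : ∀ s : Set α, MeasurableSet (X ⁻¹' s)) :
    ∑ a : α, (μ (X ⁻¹' {a})).toReal = 1 := by
  rw [← ENNReal.toReal_sum (fun a _ => measure_ne_top μ _)]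
  rw [MeasureTheory.sum_measure_preimage_singleton _ (fun y _ => hX {y})]
  simp

lemma mutualInfo2_zero_of_indep {Ω : Type} [MeasurableSpace Ω] (μ : Measure Ω)
    [IsProbabilityMeasure μ] {α β : Type*} [Fintype α] [Fintype β] (X : Ω → α) (Y : Ω → β)
    (hX : ∀ s : Set α, MeasurableSet (X ⁻¹' s))
    (hY : ∀ s : Set β, MeasurableSet (Y ⁻¹' s))
    (h : ∀ a b, μ ((fun ω => (X ω, Y ω)) ⁻¹' {(a, b)}) = μ (X ⁻¹' {a}) * μ (Y ⁻¹' {b})) :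
    mutualInfo2 μ X Y = 0 := by
  have hpair : entropy2 μ (fun ω => (X ω, Y ω)) = entropy2 μ X + entropy2 μ Y := by
    rw [entropy2, Fintype.sum_prod_type]
    have : ∀ a b, Real.negMulLog ((μ ((fun ω => (X ω, Y ω)) ⁻¹' {(a, b)})).toReal)
        = (μ (Y ⁻¹' {b})).toReal * Real.negMulLog ((μ (X ⁻¹' {a})).toReal)
          + (μ (X ⁻¹' {a})).toReal * Real.negMulLog ((μ (Y ⁻¹' {b})).toReal) := by
      intro a b
      rw [h a b, ENNReal.toReal_mul, Real.negMulLog_mul]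
    simp_rw [this, add_div, Finset.sum_add_distrib]
    congr 1
    · rw [entropy2]
      have : ∀ a : α, ∑ b : β,
          (μ (Y ⁻¹' {b})).toReal * Real.negMulLog ((μ (X ⁻¹' {a})).toReal) / Real.log 2
          = Real.negMulLog ((μ (X ⁻¹' {a})).toReal) / Real.log 2 := by
        intro a
        rw [← Finset.sum_div, ← Finset.sum_mul, sum_toReal_preimage_eq_one μ Y hY, one_mul]
      simp_rw [this]
    · rw [entropy2]
      have : ∀ a : α, ∑ b : β,
          (μ (X ⁻¹' {a})).toReal * Real.negMulLog ((μ (Y ⁻¹' {b})).toReal) / Real.log 2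
          = (μ (X ⁻¹' {a})).toReal * (∑ b : β,
              Real.negMulLog ((μ (Y ⁻¹' {b})).toReal) / Real.log 2) := by
        intro a
        rw [Finset.mul_sum]
        congr 1; ext b; ring
      simp_rw [this, ← Finset.sum_mul, sum_toReal_preimage_eq_one μ X hX, one_mul]
  rw [mutualInfo2, hpair]
  ring

lemma ldOut_coord (q k₁ k₂ : ℕ) (h1 : k₁ ≤ q) (h2 : k₂ ≤ q) (x₁ x₂ : LDVec q)
    (t : ℕ) (ht : t < k₁) :
    ldOut q k₁ k₂ x₁ x₂ ⟨q - k₁ + t, by omega⟩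
      = x₁ ⟨t, by omega⟩
        + (if h : k₁ ≤ k₂ + t then x₂ ⟨k₂ + t - k₁, by omega⟩ else 0) := by
  rw [ldOut, Pi.add_apply, shiftMat_pow_mulVec, shiftMat_pow_mulVec]
  congr 1
  · rw [dif_pos (show q - k₁ ≤ q - k₁ + t by omega)]
    congr 1
    apply Fin.ext
    show q - k₁ + t - (q - k₁) = t
    omega
  · by_cases h : k₁ ≤ k₂ + t
    · rw [dif_pos (show q - k₂ ≤ q - k₁ + t by omega), dif_pos h]
      congr 1
      apply Fin.ext
      show q - k₁ + t - (q - k₂) = k₂ + t - k₁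
      omega
    · rw [dif_neg (show ¬ (q - k₂ ≤ q - k₁ + t) by omega), dif_neg h]

set_option maxHeartbeats 1000000 in
/-- **Theorem 1.** For the LD-WT-H with `n₁ ≠ n₂` (so `n_Δ > 0`), the secrecy rate
`R = n_p + ⌊n_c / (2 n_Δ)⌋ · n_Δ + Q` is achievable, where `n_Q = n_c mod 2n_Δ` and
`Q = n_Q` if `n_Q < n_Δ` and `n₁ ≥ n₂`; `Q = n_Δ` if `n_Q ≥ n_Δ` and `n₁ ≥ n₂`;
`Q = 0` if `n_Q < n_Δ` and `n₁ < n₂`; `Q = n_Q − n_Δ` if `n_Q ≥ n_Δ` and `n₁ < n₂`. -/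
theorem ldWTH_rate_achievable (n₁ n₂ nE : ℕ) (hne : n₁ ≠ n₂)
    (nΔ nc np nQ Q : ℕ)
    (hΔ : nΔ = max n₁ n₂ - min n₁ n₂)
    (hc : nc = min (nE + nΔ) (max n₁ n₂))
    (hp : np = max n₁ n₂ - nc)
    (hQ : nQ = nc % (2 * nΔ))
    (hQdef : Q = if n₁ ≥ n₂ then (if nQ < nΔ then nQ else nΔ)
                 else (if nQ < nΔ then 0 else nQ - nΔ)) :
    ldWTHAchievable n₁ n₂ nE ((np + (nc / (2 * nΔ)) * nΔ + Q : ℕ) : ℝ) := by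
  classical
  have hΔpos : 0 < nΔ := by omega
  set q : ℕ := max (max n₁ n₂) nE with hq
  have hn1q : n₁ ≤ q := by omega
  have hn2q : n₂ ≤ q := by omega
  have hnEq : nE ≤ q := by omega
  set θ : ℕ := if n₂ ≤ n₁ then nc else nc - nΔ with hθ
  have hθle : θ ≤ n₁ := by rw [hθ]; split_ifs <;> omega
  set T : Finset ℕ := (Finset.range n₁).filter (fun t => θ ≤ t ∨ (t / nΔ) % 2 = 0) with hT
  have hTmem : ∀ t, t ∈ T ↔ (t < n₁ ∧ (θ ≤ t ∨ (t / nΔ) % 2 = 0)) := by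
    intro t; simp [hT]
  have hTlt : ∀ t ∈ T, t < n₁ := fun t ht => ((hTmem t).1 ht).1
  -- cardinality of the message set
  have hcard : T.card = np + (nc / (2 * nΔ)) * nΔ + Q := by
    have hsplit : T = (Finset.Ico θ n₁)
        ∪ (Finset.range θ).filter (fun t => (t / nΔ) % 2 = 0) := by
      ext t
      simp only [hT, Finset.mem_filter, Finset.mem_range, Finset.mem_union, Finset.mem_Ico]
      omega
    have hdisj : Disjoint (Finset.Ico θ n₁)
        ((Finset.range θ).filter (fun t => (t / nΔ) % 2 = 0)) := by
      rw [Finset.disjoint_left]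
      intro t h1 h2
      simp only [Finset.mem_Ico] at h1
      simp only [Finset.mem_filter, Finset.mem_range] at h2
      omega
    rw [hsplit, Finset.card_union_of_disjoint hdisj, Nat.card_Ico,
      even_block_count nΔ hΔpos]
    by_cases h12 : n₂ ≤ n₁
    · have hθc : θ = nc := by rw [hθ, if_pos h12]
      rw [if_pos (show n₁ ≥ n₂ from h12)] at hQdef
      rw [hθc]
      split_ifs at hQdef <;> omega
    · have hθc : θ = nc - nΔ := by rw [hθ, if_neg h12]
      rw [if_neg (show ¬ (n₁ ≥ n₂) from h12)] at hQdef
      have hncΔ : nΔ ≤ nc := by omega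
      obtain ⟨A, B, hAB, hBlt, hdA, hdB⟩ :
          ∃ A B, nc = B + A * (2*nΔ) ∧ B < 2*nΔ ∧ nc / (2*nΔ) = A ∧ nc % (2*nΔ) = B :=
        ⟨nc / (2*nΔ), nc % (2*nΔ), (Nat.mod_add_div' nc (2*nΔ)).symm, Nat.mod_lt _ (by omega), rfl, rfl⟩
      have h2Δ : nc / (2 * nΔ) = A := hdA
      by_cases hBn : nΔ ≤ B
      · have hθeq : θ = (B - nΔ) + A * (2*nΔ) := by omega
        have hdiv : θ / (2*nΔ) = A := by
          rw [hθeq, Nat.add_mul_div_right _ _ (by omega : 0 < 2*nΔ),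
            Nat.div_eq_of_lt (by omega), Nat.zero_add]
        have hmod : θ % (2*nΔ) = B - nΔ := by
          rw [hθeq, Nat.add_mul_mod_self_right, Nat.mod_eq_of_lt (by omega)]
        rw [hdiv, hmod, h2Δ]
        split_ifs at hQdef <;> omega
      · have hA0 : A ≠ 0 := by
          rintro rfl
          rw [Nat.zero_mul, Nat.add_zero] at hAB
          omega
        have hAn : (A-1) * (2*nΔ) + 2*nΔ = A * (2*nΔ) := by
          have h : A - 1 + 1 = A := by omega
          calc (A-1) * (2*nΔ) + 2*nΔ = (A-1+1)*(2*nΔ) := by ring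
            _ = A * (2*nΔ) := by rw [h]
        have hθeq : θ = (nΔ + B) + (A-1) * (2*nΔ) := by omega
        have hdiv : θ / (2*nΔ) = A - 1 := by
          rw [hθeq, Nat.add_mul_div_right _ _ (by omega : 0 < 2*nΔ),
            Nat.div_eq_of_lt (by omega), Nat.zero_add]
        have hmod : θ % (2*nΔ) = nΔ + B := by
          rw [hθeq, Nat.add_mul_mod_self_right, Nat.mod_eq_of_lt (by omega)]
        have hAn' : (A-1) * nΔ + nΔ = A * nΔ := by
          have h : A - 1 + 1 = A := by omega
          calc (A-1) * nΔ + nΔ = (A-1+1)*nΔ := by ring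
            _ = A * nΔ := by rw [h]
        rw [hdiv, hmod, h2Δ]
        split_ifs at hQdef <;> omega
  -- no jamming bit collides with a (Eve-visible) message bit
  have noclash : ∀ j ∈ T, j < nE → ∀ t ∈ T, j + n₁ ≠ t + n₂ := by
    intro j hj hjE t ht heq
    obtain ⟨hjlt, hjd⟩ := (hTmem j).1 hj
    obtain ⟨htlt, htd⟩ := (hTmem t).1 ht
    by_cases h12 : n₂ ≤ n₁
    · have hθc : θ = nc := by rw [hθ, if_pos h12]
      have ht2 : t = j + nΔ := by omega
      have hjθ : j < θ := by omega
      have hjev : (j / nΔ) % 2 = 0 := by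
        rcases hjd with h | h
        · omega
        · exact h
      have htdiv : t / nΔ = j / nΔ + 1 := by
        rw [ht2, Nat.add_div_right _ hΔpos]
      rcases htd with h | h
      · omega
      · omega
    · have hθc : θ = nc - nΔ := by rw [hθ, if_neg h12]
      have ht2 : j = t + nΔ := by omega
      have hjθ : j < θ := by omega
      have hjev : (j / nΔ) % 2 = 0 := by
        rcases hjd with h | h
        · omega
        · exact h
      have hjdiv : j / nΔ = t / nΔ + 1 := by
        rw [ht2, Nat.add_div_right _ hΔpos]
      rcases htd with h | h
      · omega
      · omega
  refine ⟨by positivity, ?_⟩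
  intro ε hε
  refine ⟨1, one_pos, 2 ^ T.card, ?_, ?_⟩
  · have h1 : ((np + (nc / (2 * nΔ)) * nΔ + Q : ℕ) : ℝ) = (T.card : ℝ) :=
      Nat.cast_inj.mpr hcard.symm
    rw [Nat.cast_one, one_mul, h1, Real.rpow_natCast]
    push_cast
    exact le_refl _
  · -- construction of the coding scheme
    set K : ℕ := 2 ^ T.card with hK
    have hKpos : 0 < K := Nat.pow_pos (by norm_num)
    have hKcard : Fintype.card ({ t // t ∈ T } → ZMod 2) = K := by
      rw [hK]
      simp [ZMod.card]
    set e : Fin K ≃ ({ t // t ∈ T } → ZMod 2) := (Fintype.equivFinOfCardEq hKcard).symm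
      with he
    set enc : Fin K → LDVec q :=
      (fun w j => if h : (j : ℕ) ∈ T then e w ⟨(j : ℕ), h⟩ else 0) with henc
    set x2f : (Fin q → ZMod 2) → LDVec q :=
      (fun v j => if ∃ t ∈ T, (j : ℕ) + n₁ = t + n₂ then 0 else v j) with hx2f
    letI mΩ : MeasurableSpace (Fin K × (Fin q → ZMod 2)) := ⊤
    haveI mscΩ : MeasurableSingletonClass (Fin K × (Fin q → ZMod 2)) := ⟨fun _ => MeasurableSpace.measurableSet_top⟩
    haveI : Nonempty (Fin K) := ⟨⟨0, hKpos⟩⟩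
    set μ : Measure (Fin K × (Fin q → ZMod 2)) := unifMeas (Fin K × (Fin q → ZMod 2)) with hμ
    haveI hprob : IsProbabilityMeasure μ := unifMeas_isProb
    have hmeas : ∀ s : Set (Fin K × (Fin q → ZMod 2)), MeasurableSet s := fun _ => MeasurableSpace.measurableSet_top
    -- counting facts
    have hcardFinK : Nat.card (Fin K) = K := by simp
    have hk0 : (K : ENNReal) ≠ 0 := by
      simp [hKpos.ne']
    have hktop : (K : ENNReal) ≠ ⊤ := ENNReal.natCast_ne_top _
    have hv0 : ((Nat.card (Fin q → ZMod 2) : ℕ) : ENNReal) ≠ 0 := by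
      simp [Nat.card_pos.ne']
    have hvtop : ((Nat.card (Fin q → ZMod 2) : ℕ) : ENNReal) ≠ ⊤ := ENNReal.natCast_ne_top _
    have hsing : ∀ (m : Fin K), (Nat.card ({m} : Set (Fin K)) : ENNReal) = 1 := by
      intro m; simp
    set g : (Fin 1 → LDVec q) → Fin K :=
      (fun y => e.symm (fun t => y 0 ⟨q - n₁ + (t : ℕ), by have := hTlt _ t.2; omega⟩))
      with hg
    -- uniformity of W
    have hW : ∀ m : Fin K, μ ((Prod.fst : (Fin K × (Fin q → ZMod 2)) → Fin K) ⁻¹' {m}) = (K : ENNReal)⁻¹ := by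
      intro m
      have hset : ((Prod.fst : (Fin K × (Fin q → ZMod 2)) → Fin K) ⁻¹' {m})
          = ({m} : Set (Fin K)) ×ˢ (Set.univ : Set (Fin q → ZMod 2)) := by
        ext ⟨a, b⟩
        simp [eq_comm]
      rw [hμ, hset, unifMeas_prod_apply, hsing, Nat.card_univ, hcardFinK,
        ENNReal.mul_inv (Or.inl hk0) (Or.inl hktop), one_mul]
      calc (Nat.card (Fin q → ZMod 2) : ENNReal) * ((K:ENNReal)⁻¹ * (Nat.card (Fin q → ZMod 2) : ENNReal)⁻¹)
          = (K:ENNReal)⁻¹ * ((Nat.card (Fin q → ZMod 2) : ENNReal) * (Nat.card (Fin q → ZMod 2) : ENNReal)⁻¹) := by ring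
        _ = (K:ENNReal)⁻¹ := by rw [ENNReal.mul_inv_cancel hv0 hvtop, mul_one]
    refine ⟨(Fin K × (Fin q → ZMod 2)), mΩ, μ, hprob, Prod.fst, fun ω _ => enc ω.1, fun ω _ => x2f ω.2, g,
      hW, ?_, ?_, ?_⟩
    · -- independence
      rw [ProbabilityTheory.indepFun_iff_measure_inter_preimage_eq_mul]
      intro s t _ _
      have e1 : (fun ω : Fin K × (Fin q → ZMod 2) =>
            ((Prod.fst ω : Fin K), (fun _ : Fin 1 => enc ω.1))) ⁻¹' s
            ∩ (fun ω : Fin K × (Fin q → ZMod 2) => (fun _ : Fin 1 => x2f ω.2)) ⁻¹' t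
          = ((fun w : Fin K => ((w, fun _ : Fin 1 => enc w) : Fin K × (Fin 1 → LDVec q))) ⁻¹' s)
            ×ˢ ((fun v : Fin q → ZMod 2 => (fun _ : Fin 1 => x2f v)) ⁻¹' t) := rfl
      have e2 : (fun ω : Fin K × (Fin q → ZMod 2) =>
            ((Prod.fst ω : Fin K), (fun _ : Fin 1 => enc ω.1))) ⁻¹' s
          = ((fun w : Fin K => ((w, fun _ : Fin 1 => enc w) : Fin K × (Fin 1 → LDVec q))) ⁻¹' s)
            ×ˢ (Set.univ : Set (Fin q → ZMod 2)) := by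
        ext ⟨a, b⟩; simp
      have e3 : (fun ω : Fin K × (Fin q → ZMod 2) => (fun _ : Fin 1 => x2f ω.2)) ⁻¹' t
          = (Set.univ : Set (Fin K))
            ×ˢ ((fun v : Fin q → ZMod 2 => (fun _ : Fin 1 => x2f v)) ⁻¹' t) := by
        ext ⟨a, b⟩; simp
      rw [hμ, e1, e2, e3, unifMeas_prod_apply, unifMeas_prod_apply, unifMeas_prod_apply,
        Nat.card_univ, Nat.card_univ, hcardFinK]
      exact (ennreal_unif_helper _ _ _ _ hk0 hktop hv0 hvtop).symm
    · -- zero decoding error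
      have hdecode : ∀ (w : Fin K) (v : Fin q → ZMod 2),
          g (fun _ : Fin 1 => ldOut q n₁ n₂ (enc w) (x2f v)) = w := by
        intro w v
        have hfun : (fun t : {x // x ∈ T} =>
            ldOut q n₁ n₂ (enc w) (x2f v)
              ⟨q - n₁ + (t : ℕ), by have := hTlt _ t.2; omega⟩) = e w := by
          funext t
          have htlt : (t : ℕ) < n₁ := hTlt _ t.2
          rw [ldOut_coord q n₁ n₂ hn1q hn2q _ _ (t : ℕ) htlt]
          have h1 : enc w ⟨(t : ℕ), by omega⟩ = e w t := by
            rw [henc]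
            dsimp only
            rw [dif_pos (show (((⟨(t : ℕ), by omega⟩ : Fin q)) : ℕ) ∈ T from t.2)]
          by_cases hc2 : n₁ ≤ n₂ + (t : ℕ)
          · rw [dif_pos hc2, hx2f]
            dsimp only
            rw [if_pos (show ∃ t' ∈ T,
                (((⟨n₂ + (t : ℕ) - n₁, by omega⟩ : Fin q)) : ℕ) + n₁ = t' + n₂ from
                ⟨(t : ℕ), t.2, by show n₂ + (t : ℕ) - n₁ + n₁ = (t : ℕ) + n₂; omega⟩)]
            rw [h1, add_zero]
          · rw [dif_neg hc2, h1, add_zero]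
        rw [hg]
        dsimp only
        rw [Equiv.symm_apply_eq]
        exact hfun
      have hempty : {ω : Fin K × (Fin q → ZMod 2) |
          g (fun _ : Fin 1 => ldOut q n₁ n₂ (enc ω.1) (x2f ω.2)) ≠ Prod.fst ω} = ∅ := by
        ext ω
        simp [hdecode ω.1 ω.2]
      show μ {ω : Fin K × (Fin q → ZMod 2) |
          g (fun _ : Fin 1 => ldOut q n₁ n₂ (enc ω.1) (x2f ω.2)) ≠ Prod.fst ω}
        ≤ ENNReal.ofReal ε
      rw [hempty, measure_empty]
      exact zero_le
    · -- perfect secrecy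
      have h2v : ∀ x : LDVec q, x + x = 0 := by
        intro x; funext i
        have h : ∀ a : ZMod 2, a + a = 0 := by decide
        exact h _
      have hx2add : ∀ u u' : Fin q → ZMod 2, x2f (u + u') = x2f u + x2f u' := by
        intro u u'; funext j
        rw [hx2f]
        dsimp only [Pi.add_apply]
        split_ifs with hb
        · simp
        · rfl
      have hcover : ∀ w : Fin K, ((shiftMat q) ^ (q - nE)).mulVec (x2f (enc w))
          = ((shiftMat q) ^ (q - nE)).mulVec (enc w) := by
        intro w; funext i
        rw [shiftMat_pow_mulVec, shiftMat_pow_mulVec]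
        by_cases hle : q - nE ≤ (i : ℕ)
        · rw [dif_pos hle, dif_pos hle]
          rw [hx2f]
          dsimp only
          split_ifs with hb
          · obtain ⟨t', ht', heq⟩ := hb
            symm
            rw [henc]
            dsimp only
            rw [dif_neg (fun hjT => noclash _ hjT (by have := i.2; simp at heq ⊢; omega)
              t' ht' (by simpa using heq))]
          · rfl
        · rw [dif_neg hle, dif_neg hle]
      have hkey : ∀ (w w' : Fin K) (v : Fin q → ZMod 2),
          ldOut q nE nE (enc w) (x2f (v + (enc w' + enc w)))
            = ldOut q nE nE (enc w') (x2f v) := by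
        intro w w' v
        rw [ldOut, ldOut, hx2add, hx2add, Matrix.mulVec_add, Matrix.mulVec_add,
          hcover, hcover]
        have h : ∀ x y z : LDVec q, x + (y + (z + x)) = z + y := by
          intro x y z
          calc x + (y + (z + x)) = (z + y) + (x + x) := by abel
            _ = z + y := by rw [h2v, add_zero]
        exact h _ _ _
      set Yc : Fin K → (Fin q → ZMod 2) → (Fin 1 → LDVec q) :=
        (fun w v => (fun _ : Fin 1 => ldOut q nE nE (enc w) (x2f v))) with hYc
      have hcards : ∀ (w w' : Fin K) (y : Fin 1 → LDVec q),
          Nat.card {v : Fin q → ZMod 2 | Yc w v = y}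
            = Nat.card {v : Fin q → ZMod 2 | Yc w' v = y} := by
        intro w w' y
        apply Nat.card_congr
        apply Equiv.subtypeEquiv (Equiv.addRight (enc w + enc w'))
        intro v
        show Yc w v = y ↔ Yc w' (v + (enc w + enc w')) = y
        rw [hYc]
        dsimp only
        simp only [hkey w' w v]
      have hsetpair : ∀ (w : Fin K) (y : Fin 1 → LDVec q),
          ((fun ω : Fin K × (Fin q → ZMod 2) => (ω.1, Yc ω.1 ω.2)) ⁻¹' {(w, y)})
            = ({w} : Set (Fin K)) ×ˢ {v : Fin q → ZMod 2 | Yc w v = y} := by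
        intro w y; ext ⟨a, b⟩
        simp only [Set.mem_preimage, Set.mem_singleton_iff, Prod.ext_iff, Set.mem_prod,
          Set.mem_setOf_eq]
        constructor
        · rintro ⟨rfl, h⟩; exact ⟨rfl, h⟩
        · rintro ⟨rfl, h⟩; exact ⟨rfl, h⟩
      have hμpair : ∀ (w : Fin K) (y : Fin 1 → LDVec q),
          μ ((fun ω : Fin K × (Fin q → ZMod 2) => (ω.1, Yc ω.1 ω.2)) ⁻¹' {(w, y)})
            = (Nat.card {v : Fin q → ZMod 2 | Yc w v = y} : ENNReal)
              * ((K : ENNReal) * (Nat.card (Fin q → ZMod 2) : ENNReal))⁻¹ := by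
        intro w y
        rw [hμ, hsetpair, unifMeas_prod_apply, hsing, one_mul, hcardFinK]
      have hYset : ∀ y : Fin 1 → LDVec q,
          ((fun ω : Fin K × (Fin q → ZMod 2) => Yc ω.1 ω.2) ⁻¹' {y})
            = ⋃ w : Fin K,
              ((fun ω : Fin K × (Fin q → ZMod 2) => (ω.1, Yc ω.1 ω.2)) ⁻¹' {(w, y)}) := by
        intro y; ext ω
        simp only [Set.mem_preimage, Set.mem_singleton_iff, Set.mem_iUnion, Prod.ext_iff]
        constructor
        · intro h; exact ⟨ω.1, rfl, h⟩
        · rintro ⟨w, -, h⟩; exact h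
      have hpair : ∀ (w : Fin K) (y : Fin 1 → LDVec q),
          μ ((fun ω : Fin K × (Fin q → ZMod 2) => (ω.1, Yc ω.1 ω.2)) ⁻¹' {(w, y)})
            = μ ((Prod.fst : (Fin K × (Fin q → ZMod 2)) → Fin K) ⁻¹' {w})
              * μ ((fun ω : Fin K × (Fin q → ZMod 2) => Yc ω.1 ω.2) ⁻¹' {y}) := by
        intro w y
        have hdisj : Pairwise (Function.onFun Disjoint (fun w' : Fin K =>
            ((fun ω : Fin K × (Fin q → ZMod 2) => (ω.1, Yc ω.1 ω.2)) ⁻¹' {(w', y)}))) := by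
          intro i j hij
          rw [Function.onFun, Set.disjoint_left]
          rintro ω hωi hωj
          simp only [Set.mem_preimage, Set.mem_singleton_iff, Prod.ext_iff] at hωi hωj
          exact hij (hωi.1.symm.trans hωj.1)
        have hY : μ ((fun ω : Fin K × (Fin q → ZMod 2) => Yc ω.1 ω.2) ⁻¹' {y})
            = (K : ENNReal) * ((Nat.card {v : Fin q → ZMod 2 | Yc w v = y} : ENNReal)
              * ((K : ENNReal) * (Nat.card (Fin q → ZMod 2) : ENNReal))⁻¹) := by
          rw [hYset y, measure_iUnion hdisj (fun w' => hmeas _), tsum_fintype]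
          have hterm : ∀ w' : Fin K,
              μ ((fun ω : Fin K × (Fin q → ZMod 2) => (ω.1, Yc ω.1 ω.2)) ⁻¹' {(w', y)})
                = (Nat.card {v : Fin q → ZMod 2 | Yc w v = y} : ENNReal)
                  * ((K : ENNReal) * (Nat.card (Fin q → ZMod 2) : ENNReal))⁻¹ := by
            intro w'
            rw [hμpair w' y, hcards w' w y]
          rw [Finset.sum_congr rfl (fun w' _ => hterm w'), Finset.sum_const,
            Finset.card_univ, Fintype.card_fin, nsmul_eq_mul]
        rw [hY, hμpair w y, hW w, ← mul_assoc, ENNReal.inv_mul_cancel hk0 hktop, one_mul]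
      have hzero : mutualInfo2 μ (Prod.fst : (Fin K × (Fin q → ZMod 2)) → Fin K)
          (fun ω : Fin K × (Fin q → ZMod 2) => Yc ω.1 ω.2) = 0 :=
        mutualInfo2_zero_of_indep μ _ _ (fun _ => hmeas _) (fun _ => hmeas _) hpair
      show mutualInfo2 μ (Prod.fst : (Fin K × (Fin q → ZMod 2)) → Fin K)
          (fun ω : Fin K × (Fin q → ZMod 2) => Yc ω.1 ω.2) ≤ ε * ((1 : ℕ) : ℝ)
      rw [hzero]
      norm_num
      exact hε.le
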